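/- Second-order accuracy of the Strang/leapfrog splitting: for n×n complex matrices A, B, exp(xA/2)·exp(xB)·exp(xA/2) = exp(x(A+B)) + O(x³) as x → 0; equivalently, the difference of the two sides, when expanded in powers of x, has vanishing coefficients in degrees 0, 1, and 2. -/

import Mathlib

open Matrix NormedSpace Nat

attribute [local instance] Matrix.linftyOpNormedRing Matrix.linftyOpNormedAlgebra

-- tail bound for exp in a complex Banach algebra
lemma my_exp_remainder {𝔸 : Type*} [NormedRing 𝔸] [NormedAlgebra ℂ 𝔸] [CompleteSpace 𝔸]
    (M : 𝔸) : ‖NormedSpace.exp M - (1 + M + (2:ℂ)⁻¹ • M^2)‖ ≤ ‖M‖^3 * Real.exp ‖M‖ := by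
  have hf : Summable (fun k => ((k ! : ℂ))⁻¹ • M ^ k) := expSeries_summable' (𝕂 := ℂ) M
  have h3 := Summable.sum_add_tsum_nat_add (f := fun k => ((k ! : ℂ))⁻¹ • M ^ k) 3 hf
  have hsum : ∑ i ∈ Finset.range 3, ((i ! : ℂ))⁻¹ • M ^ i = 1 + M + (2:ℂ)⁻¹ • M^2 := by
    simp [Finset.sum_range_succ, Nat.factorial]
  have hrw : NormedSpace.exp M - (1 + M + (2:ℂ)⁻¹ • M^2) = ∑' i, (((i+3)! : ℂ))⁻¹ • M ^ (i+3) := by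
    beta_reduce at h3
    rw [exp_eq_tsum ℂ]
    beta_reduce
    rw [← h3, hsum]
    abel
  rw [hrw]
  have hexp : ∑' i, ‖M‖ ^ i / i ! = Real.exp ‖M‖ := by
    rw [Real.exp_eq_exp_ℝ, exp_eq_tsum_div]
  have hg : HasSum (fun i => ‖M‖^3 * (‖M‖ ^ i / i !)) (‖M‖^3 * Real.exp ‖M‖) := by
    rw [← hexp]
    exact (Real.summable_pow_div_factorial ‖M‖).hasSum.mul_left _
  refine tsum_of_norm_bounded hg fun i => ?_
  rw [norm_smul]
  have h1 : ‖(((i+3)! : ℂ))⁻¹‖ = ((i+3)! : ℝ)⁻¹ := by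
    simp
  rw [h1]
  have h2 : ‖M ^ (i+3)‖ ≤ ‖M‖ ^ (i+3) := norm_pow_le' M (by omega)
  have h4 : ((i+3)! : ℝ)⁻¹ ≤ (i ! : ℝ)⁻¹ := by
    apply inv_anti₀
    · exact_mod_cast Nat.factorial_pos i
    · exact_mod_cast Nat.factorial_le (by omega)
  calc ((i+3)! : ℝ)⁻¹ * ‖M ^ (i+3)‖ ≤ (i ! : ℝ)⁻¹ * ‖M‖ ^ (i+3) := by
        apply mul_le_mul h4 h2 (norm_nonneg _) (by positivity)
    _ = ‖M‖^3 * (‖M‖ ^ i / i !) := by rw [pow_add]; ring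

lemma my_rem_bound (n : ℕ) (M : Matrix (Fin n) (Fin n) ℂ) (y : ℂ) (hy : ‖y‖ ≤ 1) :
    ‖NormedSpace.exp (y • M) - (1 + y • M + (2:ℂ)⁻¹ • (y • M)^2)‖
      ≤ (‖M‖^3 * Real.exp ‖M‖) * ‖y‖^3 := by
  have h1 : ‖y • M‖ = ‖y‖ * ‖M‖ := norm_smul _ _
  have h2 : ‖y‖ * ‖M‖ ≤ ‖M‖ := mul_le_of_le_one_left (norm_nonneg _) hy
  calc ‖NormedSpace.exp (y • M) - (1 + y • M + (2:ℂ)⁻¹ • (y • M)^2)‖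
      ≤ ‖y • M‖^3 * Real.exp ‖y • M‖ := my_exp_remainder _
    _ = (‖y‖^3 * ‖M‖^3) * Real.exp (‖y‖ * ‖M‖) := by rw [h1, mul_pow]
    _ ≤ (‖y‖^3 * ‖M‖^3) * Real.exp ‖M‖ := by
        apply mul_le_mul_of_nonneg_left (Real.exp_le_exp.mpr h2) (by positivity)
    _ = (‖M‖^3 * Real.exp ‖M‖) * ‖y‖^3 := by ring

lemma my_P_bound (n : ℕ) (M : Matrix (Fin n) (Fin n) ℂ) (y : ℂ) (hy : ‖y‖ ≤ 1) :
    ‖(1 : Matrix (Fin n) (Fin n) ℂ) + y • M + (2:ℂ)⁻¹ • (y • M)^2‖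
      ≤ ‖(1 : Matrix (Fin n) (Fin n) ℂ)‖ + ‖M‖ + ‖M‖^2 := by
  have h2 : ‖y • M‖ ≤ ‖M‖ := by
    rw [norm_smul]; exact mul_le_of_le_one_left (norm_nonneg _) hy
  have h3 : ‖(y • M)^2‖ ≤ ‖M‖^2 := by
    calc ‖(y • M)^2‖ ≤ ‖y • M‖^2 := norm_pow_le' _ (by omega)
      _ ≤ ‖M‖^2 := by apply pow_le_pow_left₀ (norm_nonneg _) h2
  have h4 : ‖(2:ℂ)⁻¹ • (y • M)^2‖ ≤ ‖M‖^2 := by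
    rw [norm_smul]
    have : ‖((2:ℂ))⁻¹‖ = 2⁻¹ := by simp
    rw [this]
    nlinarith [norm_nonneg ((y • M)^2)]
  calc ‖(1 : Matrix (Fin n) (Fin n) ℂ) + y • M + (2:ℂ)⁻¹ • (y • M)^2‖
      ≤ ‖(1 : Matrix (Fin n) (Fin n) ℂ) + y • M‖ + ‖(2:ℂ)⁻¹ • (y • M)^2‖ := norm_add_le _ _
    _ ≤ (‖(1 : Matrix (Fin n) (Fin n) ℂ)‖ + ‖y • M‖) + ‖(2:ℂ)⁻¹ • (y • M)^2‖ := by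
        gcongr; exact norm_add_le _ _
    _ ≤ ‖(1 : Matrix (Fin n) (Fin n) ℂ)‖ + ‖M‖ + ‖M‖^2 := by
        have := norm_nonneg (1 : Matrix (Fin n) (Fin n) ℂ); linarith

lemma my_E_bound (n : ℕ) (M : Matrix (Fin n) (Fin n) ℂ) (y : ℂ) (hy : ‖y‖ ≤ 1) :
    ‖NormedSpace.exp (y • M)‖ ≤ ‖M‖^3 * Real.exp ‖M‖ + (‖(1 : Matrix (Fin n) (Fin n) ℂ)‖ + ‖M‖ + ‖M‖^2) := by
  have h1 := my_rem_bound n M y hy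
  have h2 := my_P_bound n M y hy
  have h3 : ‖y‖^3 ≤ 1 := pow_le_one₀ (norm_nonneg _) hy
  have h4 : (0:ℝ) ≤ ‖M‖^3 * Real.exp ‖M‖ := by positivity
  calc ‖NormedSpace.exp (y • M)‖
      ≤ ‖NormedSpace.exp (y • M) - (1 + y • M + (2:ℂ)⁻¹ • (y • M)^2)‖
        + ‖(1 : Matrix (Fin n) (Fin n) ℂ) + y • M + (2:ℂ)⁻¹ • (y • M)^2‖ := by
        have h := norm_add_le (NormedSpace.exp (y • M) - (1 + y • M + (2:ℂ)⁻¹ • (y • M)^2))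
          (1 + y • M + (2:ℂ)⁻¹ • (y • M)^2)
        rwa [sub_add_cancel] at h
    _ ≤ ‖M‖^3 * Real.exp ‖M‖ + (‖(1 : Matrix (Fin n) (Fin n) ℂ)‖ + ‖M‖ + ‖M‖^2) := by
        nlinarith

lemma my_poly_id (n : ℕ) (A B : Matrix (Fin n) (Fin n) ℂ) (x : ℂ) :
    (1 + (x/2) • A + (2:ℂ)⁻¹ • ((x/2) • A)^2) * (1 + x • B + (2:ℂ)⁻¹ • (x • B)^2)
      * (1 + (x/2) • A + (2:ℂ)⁻¹ • ((x/2) • A)^2)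
    - (1 + x • (A+B) + (2:ℂ)⁻¹ • (x • (A+B))^2)
    = x^3 • ((((8:ℂ))⁻¹ • (B * (A * A)) + ((4:ℂ))⁻¹ • (B * (B * A)) + ((8:ℂ))⁻¹ • (A * (A * A)) + ((4:ℂ))⁻¹ • (A * (B * A)) + ((4:ℂ))⁻¹ • (A * (B * B)) + ((8:ℂ))⁻¹ • (A * (A * B)))
      + x • (((16:ℂ))⁻¹ • (B * (B * (A * A))) + ((16:ℂ))⁻¹ • (A * (B * (A * A))) + ((8:ℂ))⁻¹ • (A * (B * (B * A))) + ((64:ℂ))⁻¹ • (A * (A * (A * A))) + ((16:ℂ))⁻¹ • (A * (A * (B * A))) + ((16:ℂ))⁻¹ • (A * (A * (B * B))))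
      + x^2 • (((32:ℂ))⁻¹ • (A * (B * (B * (A * A)))) + ((64:ℂ))⁻¹ • (A * (A * (B * (A * A)))) + ((32:ℂ))⁻¹ • (A * (A * (B * (B * A)))))
      + x^3 • (((128:ℂ))⁻¹ • (A * (A * (B * (B * (A * A))))))) := by
  simp only [pow_two, mul_add, add_mul, smul_mul_assoc, mul_smul_comm, smul_smul, smul_add,
    mul_one, one_mul, mul_assoc]
  module

set_option maxHeartbeats 2000000 in
theorem stmt_8 (n : ℕ) (A B : Matrix (Fin n) (Fin n) ℂ) :
    ∃ C : ℝ, ∀ x : ℂ, ‖x‖ ≤ 1 →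
      ‖NormedSpace.exp ((x / 2) • A) * NormedSpace.exp (x • B) * NormedSpace.exp ((x / 2) • A)
          - NormedSpace.exp (x • (A + B))‖ ≤ C * ‖x‖ ^ 3 := by
  set C3 : Matrix (Fin n) (Fin n) ℂ := ((8:ℂ))⁻¹ • (B * (A * A)) + ((4:ℂ))⁻¹ • (B * (B * A)) + ((8:ℂ))⁻¹ • (A * (A * A)) + ((4:ℂ))⁻¹ • (A * (B * A)) + ((4:ℂ))⁻¹ • (A * (B * B)) + ((8:ℂ))⁻¹ • (A * (A * B)) with hC3
  set C4 : Matrix (Fin n) (Fin n) ℂ := ((16:ℂ))⁻¹ • (B * (B * (A * A))) + ((16:ℂ))⁻¹ • (A * (B * (A * A))) + ((8:ℂ))⁻¹ • (A * (B * (B * A))) + ((64:ℂ))⁻¹ • (A * (A * (A * A))) + ((16:ℂ))⁻¹ • (A * (A * (B * A))) + ((16:ℂ))⁻¹ • (A * (A * (B * B))) with hC4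
  set C5 : Matrix (Fin n) (Fin n) ℂ := ((32:ℂ))⁻¹ • (A * (B * (B * (A * A)))) + ((64:ℂ))⁻¹ • (A * (A * (B * (A * A)))) + ((32:ℂ))⁻¹ • (A * (A * (B * (B * A)))) with hC5
  set C6 : Matrix (Fin n) (Fin n) ℂ := ((128:ℂ))⁻¹ • (A * (A * (B * (B * (A * A))))) with hC6
  set N1 : ℝ := ‖(1 : Matrix (Fin n) (Fin n) ℂ)‖ with hN1
  set KA : ℝ := ‖A‖^3 * Real.exp ‖A‖ with hKA
  set KB : ℝ := ‖B‖^3 * Real.exp ‖B‖ with hKB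
  set KS : ℝ := ‖A+B‖^3 * Real.exp ‖A+B‖ with hKS
  set PA : ℝ := N1 + ‖A‖ + ‖A‖^2 with hPA
  set PB : ℝ := N1 + ‖B‖ + ‖B‖^2 with hPB
  set EA : ℝ := KA + PA with hEA
  set EB : ℝ := KB + PB with hEB
  set CQ : ℝ := ‖C3‖ + ‖C4‖ + ‖C5‖ + ‖C6‖ with hCQ
  refine ⟨KA * (EB * EA) + PA * (KB * EA) + PA * PB * KA + CQ + KS, fun x hx => ?_⟩
  have hx0 : (0:ℝ) ≤ ‖x‖ := norm_nonneg _
  have hx2 : ‖x / 2‖ ≤ 1 := by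
    rw [norm_div]
    simp only [Complex.norm_ofNat]
    linarith
  have hxhalf : ‖x / 2‖ ≤ ‖x‖ := by
    rw [norm_div]
    simp only [Complex.norm_ofNat]
    linarith
  have hx3 : ‖x / 2‖ ^ 3 ≤ ‖x‖ ^ 3 := pow_le_pow_left₀ (norm_nonneg _) hxhalf 3
  have hxp1 : ‖x‖ ≤ 1 := hx
  -- abbreviations
  set Pa : Matrix (Fin n) (Fin n) ℂ := 1 + (x/2) • A + (2:ℂ)⁻¹ • ((x/2) • A)^2 with hPa
  set Pb : Matrix (Fin n) (Fin n) ℂ := 1 + x • B + (2:ℂ)⁻¹ • (x • B)^2 with hPb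
  set Ps : Matrix (Fin n) (Fin n) ℂ := 1 + x • (A+B) + (2:ℂ)⁻¹ • (x • (A+B))^2 with hPs
  have hKA0 : (0:ℝ) ≤ KA := by rw [hKA]; positivity
  have hKB0 : (0:ℝ) ≤ KB := by rw [hKB]; positivity
  have hra : ‖NormedSpace.exp ((x/2) • A) - Pa‖ ≤ KA * ‖x‖^3 := by
    rw [hPa, hKA]
    exact (my_rem_bound n A (x/2) hx2).trans
      (mul_le_mul_of_nonneg_left hx3 (by positivity))
  have hrb : ‖NormedSpace.exp (x • B) - Pb‖ ≤ KB * ‖x‖^3 := by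
    rw [hPb, hKB]; exact my_rem_bound n B x hx
  have hrs : ‖NormedSpace.exp (x • (A+B)) - Ps‖ ≤ KS * ‖x‖^3 := by
    rw [hPs, hKS]; exact my_rem_bound n (A+B) x hx
  have hPab : ‖Pa‖ ≤ PA := by rw [hPa, hPA, hN1]; exact my_P_bound n A (x/2) hx2
  have hPbb : ‖Pb‖ ≤ PB := by rw [hPb, hPB, hN1]; exact my_P_bound n B x hx
  have hEab : ‖NormedSpace.exp ((x/2) • A)‖ ≤ EA := by
    rw [hEA, hKA, hPA, hN1]; exact my_E_bound n A (x/2) hx2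
  have hEbb : ‖NormedSpace.exp (x • B)‖ ≤ EB := by
    rw [hEB, hKB, hPB, hN1]; exact my_E_bound n B x hx
  have hEA0 : (0:ℝ) ≤ EA := (norm_nonneg _).trans hEab
  have hEB0 : (0:ℝ) ≤ EB := (norm_nonneg _).trans hEbb
  have hPA0 : (0:ℝ) ≤ PA := (norm_nonneg _).trans hPab
  have hPB0 : (0:ℝ) ≤ PB := (norm_nonneg _).trans hPbb
  have key : NormedSpace.exp ((x/2) • A) * NormedSpace.exp (x • B) * NormedSpace.exp ((x/2) • A) - NormedSpace.exp (x • (A+B))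
      = (NormedSpace.exp ((x/2) • A) - Pa) * (NormedSpace.exp (x • B) * NormedSpace.exp ((x/2) • A))
        + Pa * ((NormedSpace.exp (x • B) - Pb) * NormedSpace.exp ((x/2) • A))
        + (Pa * Pb) * (NormedSpace.exp ((x/2) • A) - Pa)
        + (Pa * Pb * Pa - Ps)
        + (Ps - NormedSpace.exp (x • (A+B))) := by noncomm_ring
  have hD : ‖Pa * Pb * Pa - Ps‖ ≤ CQ * ‖x‖^3 := by
    rw [hPa, hPb, hPs, my_poly_id n A B x, ← hC3, ← hC4, ← hC5, ← hC6]
    rw [norm_smul, norm_pow]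
    have h1 : ‖C3 + x • C4 + x^2 • C5 + x^3 • C6‖ ≤ CQ := by
      have k4 : ‖x • C4‖ ≤ ‖C4‖ := by
        rw [norm_smul]; exact mul_le_of_le_one_left (norm_nonneg _) hx
      have k5 : ‖x^2 • C5‖ ≤ ‖C5‖ := by
        rw [norm_smul, norm_pow]
        exact mul_le_of_le_one_left (norm_nonneg _) (pow_le_one₀ hx0 hx)
      have k6 : ‖x^3 • C6‖ ≤ ‖C6‖ := by
        rw [norm_smul, norm_pow]
        exact mul_le_of_le_one_left (norm_nonneg _) (pow_le_one₀ hx0 hx)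
      calc ‖C3 + x • C4 + x^2 • C5 + x^3 • C6‖
          ≤ ‖C3 + x • C4 + x^2 • C5‖ + ‖x^3 • C6‖ := norm_add_le _ _
        _ ≤ (‖C3 + x • C4‖ + ‖x^2 • C5‖) + ‖x^3 • C6‖ := by gcongr; exact norm_add_le _ _
        _ ≤ ((‖C3‖ + ‖x • C4‖) + ‖x^2 • C5‖) + ‖x^3 • C6‖ := by gcongr; exact norm_add_le _ _
        _ ≤ CQ := by rw [hCQ]; linarith
    calc ‖x‖^3 * ‖C3 + x • C4 + x^2 • C5 + x^3 • C6‖ ≤ ‖x‖^3 * CQ := by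
          exact mul_le_mul_of_nonneg_left h1 (by positivity)
      _ = CQ * ‖x‖^3 := by ring
  have ht1 : ‖(NormedSpace.exp ((x/2) • A) - Pa) * (NormedSpace.exp (x • B) * NormedSpace.exp ((x/2) • A))‖
      ≤ (KA * (EB * EA)) * ‖x‖^3 := by
    calc ‖(NormedSpace.exp ((x/2) • A) - Pa) * (NormedSpace.exp (x • B) * NormedSpace.exp ((x/2) • A))‖
        ≤ ‖NormedSpace.exp ((x/2) • A) - Pa‖ * ‖NormedSpace.exp (x • B) * NormedSpace.exp ((x/2) • A)‖ := norm_mul_le _ _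
      _ ≤ (KA * ‖x‖^3) * (EB * EA) := by
          apply mul_le_mul hra ((norm_mul_le _ _).trans
            (mul_le_mul hEbb hEab (norm_nonneg _) hEB0)) (norm_nonneg _) (by positivity)
      _ = (KA * (EB * EA)) * ‖x‖^3 := by ring
  have ht2 : ‖Pa * ((NormedSpace.exp (x • B) - Pb) * NormedSpace.exp ((x/2) • A))‖
      ≤ (PA * (KB * EA)) * ‖x‖^3 := by
    calc ‖Pa * ((NormedSpace.exp (x • B) - Pb) * NormedSpace.exp ((x/2) • A))‖
        ≤ ‖Pa‖ * ‖(NormedSpace.exp (x • B) - Pb) * NormedSpace.exp ((x/2) • A)‖ := norm_mul_le _ _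
      _ ≤ PA * ((KB * ‖x‖^3) * EA) := by
          apply mul_le_mul hPab ((norm_mul_le _ _).trans
            (mul_le_mul hrb hEab (norm_nonneg _) (by positivity))) (norm_nonneg _) hPA0
      _ = (PA * (KB * EA)) * ‖x‖^3 := by ring
  have ht3 : ‖(Pa * Pb) * (NormedSpace.exp ((x/2) • A) - Pa)‖ ≤ (PA * PB * KA) * ‖x‖^3 := by
    calc ‖(Pa * Pb) * (NormedSpace.exp ((x/2) • A) - Pa)‖
        ≤ ‖Pa * Pb‖ * ‖NormedSpace.exp ((x/2) • A) - Pa‖ := norm_mul_le _ _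
      _ ≤ (PA * PB) * (KA * ‖x‖^3) := by
          apply mul_le_mul ((norm_mul_le _ _).trans
            (mul_le_mul hPab hPbb (norm_nonneg _) hPA0)) hra (norm_nonneg _) (by positivity)
      _ = (PA * PB * KA) * ‖x‖^3 := by ring
  have ht5 : ‖Ps - NormedSpace.exp (x • (A+B))‖ ≤ KS * ‖x‖^3 := by
    rw [norm_sub_rev]; exact hrs
  rw [key]
  calc ‖(NormedSpace.exp ((x/2) • A) - Pa) * (NormedSpace.exp (x • B) * NormedSpace.exp ((x/2) • A))
        + Pa * ((NormedSpace.exp (x • B) - Pb) * NormedSpace.exp ((x/2) • A))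
        + (Pa * Pb) * (NormedSpace.exp ((x/2) • A) - Pa)
        + (Pa * Pb * Pa - Ps)
        + (Ps - NormedSpace.exp (x • (A+B)))‖
      ≤ ‖(NormedSpace.exp ((x/2) • A) - Pa) * (NormedSpace.exp (x • B) * NormedSpace.exp ((x/2) • A))
        + Pa * ((NormedSpace.exp (x • B) - Pb) * NormedSpace.exp ((x/2) • A))
        + (Pa * Pb) * (NormedSpace.exp ((x/2) • A) - Pa)
        + (Pa * Pb * Pa - Ps)‖ + ‖Ps - NormedSpace.exp (x • (A+B))‖ := norm_add_le _ _
    _ ≤ (‖(NormedSpace.exp ((x/2) • A) - Pa) * (NormedSpace.exp (x • B) * NormedSpace.exp ((x/2) • A))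
        + Pa * ((NormedSpace.exp (x • B) - Pb) * NormedSpace.exp ((x/2) • A))
        + (Pa * Pb) * (NormedSpace.exp ((x/2) • A) - Pa)‖ + ‖Pa * Pb * Pa - Ps‖)
        + ‖Ps - NormedSpace.exp (x • (A+B))‖ := by gcongr; exact norm_add_le _ _
    _ ≤ ((‖(NormedSpace.exp ((x/2) • A) - Pa) * (NormedSpace.exp (x • B) * NormedSpace.exp ((x/2) • A))
        + Pa * ((NormedSpace.exp (x • B) - Pb) * NormedSpace.exp ((x/2) • A))‖
        + ‖(Pa * Pb) * (NormedSpace.exp ((x/2) • A) - Pa)‖) + ‖Pa * Pb * Pa - Ps‖)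
        + ‖Ps - NormedSpace.exp (x • (A+B))‖ := by gcongr; exact norm_add_le _ _
    _ ≤ (((‖(NormedSpace.exp ((x/2) • A) - Pa) * (NormedSpace.exp (x • B) * NormedSpace.exp ((x/2) • A))‖
        + ‖Pa * ((NormedSpace.exp (x • B) - Pb) * NormedSpace.exp ((x/2) • A))‖)
        + ‖(Pa * Pb) * (NormedSpace.exp ((x/2) • A) - Pa)‖) + ‖Pa * Pb * Pa - Ps‖)
        + ‖Ps - NormedSpace.exp (x • (A+B))‖ := by gcongr; exact norm_add_le _ _
    _ ≤ (KA * (EB * EA)) * ‖x‖^3 + (PA * (KB * EA)) * ‖x‖^3 + (PA * PB * KA) * ‖x‖^3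
        + CQ * ‖x‖^3 + KS * ‖x‖^3 :=
        add_le_add (add_le_add (add_le_add (add_le_add ht1 ht2) ht3) hD) ht5
    _ = (KA * (EB * EA) + PA * (KB * EA) + PA * PB * KA + CQ + KS) * ‖x‖^3 := by ring
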